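/- Let P be a slant irreducible finite Γ-colored d-complete poset with top tree T, and assume Γ is simply laced. If T contains more than one element, then there exists a unique element s ∈ T that covers more than one element in T; this element s covers exactly two elements in T and is comparable to every element of T. -/

import Mathlib

/-!
Common definitions: Dynkin diagram data, Γ-colored posets, and the coloring
properties EC, NA, AC, ICE2, UCB1, LCB1 from the paper, together with
Γ-colored d-complete and Γ-colored minuscule posets, top trees, slant
irreducibility, extensions, lower frontier censuses, and full heaps.
-/

universe u v w

variable {Γ : Type u} {P : Type v}

/-- The integers `θ a b` form a Dynkin diagram datum. -/
def DynkinDatum (θ : Γ → Γ → ℤ) : Prop :=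
  (∀ a : Γ, θ a a = 2) ∧ (∀ a b : Γ, a ≠ b → θ a b ≤ 0) ∧
    (∀ a b : Γ, a ≠ b → (θ a b = 0 ↔ θ b a = 0))

/-- Colors `a` and `b` are adjacent. -/
def AdjColor (θ : Γ → Γ → ℤ) (a b : Γ) : Prop := θ a b < 0

/-- The Dynkin diagram is simply laced. -/
def SimplyLaced (θ : Γ → Γ → ℤ) : Prop :=
  ∀ a b : Γ, a ≠ b → θ a b = 0 ∨ θ a b = -1

/-- All closed intervals are finite. -/
def LocallyFinitePoset (α : Type*) [PartialOrder α] : Prop :=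
  ∀ x y : α, (Set.Icc x y).Finite

/-- A poset is connected if it cannot be written as a disjoint union of two nonempty
subposets with no comparabilities between them. -/
def ConnectedPoset (α : Type*) [PartialOrder α] : Prop :=
  ∀ S : Set α, S.Nonempty → Sᶜ.Nonempty → ∃ x ∈ S, ∃ y ∈ Sᶜ, x ≤ y ∨ y ≤ x

section
variable [PartialOrder P]

/-- (EC) Elements with equal colors are comparable. -/
def ColoredEC (κ : P → Γ) : Prop := ∀ x y : P, κ x = κ y → x ≤ y ∨ y ≤ x

/-- (NA) Neighbors have adjacent colors. -/
def ColoredNA (θ : Γ → Γ → ℤ) (κ : P → Γ) : Prop :=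
  ∀ x y : P, x ⋖ y → AdjColor θ (κ x) (κ y)

/-- (AC) Elements with adjacent colors are comparable. -/
def ColoredAC (θ : Γ → Γ → ℤ) (κ : P → Γ) : Prop :=
  ∀ x y : P, AdjColor θ (κ x) (κ y) → x ≤ y ∨ y ≤ x

/-- (ICE2) Between consecutive elements of a color `a`, the census of colors
adjacent to `a` is two. -/
def ColoredICE2 (θ : Γ → Γ → ℤ) (κ : P → Γ) : Prop :=
  ∀ (a : Γ) (x y : P), κ x = a → κ y = a → x < y → (∀ z ∈ Set.Ioo x y, κ z ≠ a) →
    (∑ᶠ z ∈ Set.Ioo x y, -θ (κ z) a) = 2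

/-- `U(x,P)`: elements above `x` with color adjacent to that of `x`. -/
def USet (θ : Γ → Γ → ℤ) (κ : P → Γ) (x : P) : Set P :=
  {y : P | x < y ∧ AdjColor θ (κ y) (κ x)}

/-- `L(x,P)`: elements below `x` with color adjacent to that of `x`. -/
def LSet (θ : Γ → Γ → ℤ) (κ : P → Γ) (x : P) : Set P :=
  {y : P | y < x ∧ AdjColor θ (κ y) (κ x)}

/-- (UCB1) Upper frontier census bound. -/
def ColoredUCB1 (θ : Γ → Γ → ℤ) (κ : P → Γ) : Prop :=
  ∀ x : P, (∀ y : P, κ y = κ x → ¬x < y) →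
    (USet θ κ x).Finite ∧ (∑ᶠ y ∈ USet θ κ x, -θ (κ y) (κ x)) ≤ 1

/-- (LCB1) Lower frontier census bound. -/
def ColoredLCB1 (θ : Γ → Γ → ℤ) (κ : P → Γ) : Prop :=
  ∀ x : P, (∀ y : P, κ y = κ x → ¬y < x) →
    (LSet θ κ x).Finite ∧ (∑ᶠ y ∈ LSet θ κ x, -θ (κ y) (κ x)) ≤ 1

/-- A Γ-colored d-complete poset: locally finite, surjectively colored, and
satisfying EC, NA, AC, ICE2, and UCB1. -/
def GColoredDComplete (θ : Γ → Γ → ℤ) (κ : P → Γ) : Prop :=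
  LocallyFinitePoset P ∧ Function.Surjective κ ∧ ColoredEC κ ∧ ColoredNA θ κ ∧
    ColoredAC θ κ ∧ ColoredICE2 θ κ ∧ ColoredUCB1 θ κ

/-- A Γ-colored minuscule poset: Γ-colored d-complete and LCB1. -/
def GColoredMinuscule (θ : Γ → Γ → ℤ) (κ : P → Γ) : Prop :=
  GColoredDComplete θ κ ∧ ColoredLCB1 θ κ

/-- The top tree: the set of elements maximal in their color class. -/
def TopTree (κ : P → Γ) : Set P := {x : P | ∀ y : P, κ y = κ x → ¬x < y}

/-- `x` is covered by `y` within the subposet `S`. -/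
def CoversIn (S : Set P) (x y : P) : Prop :=
  x ∈ S ∧ y ∈ S ∧ x < y ∧ ∀ z ∈ S, x < z → ¬z < y

/-- Slant irreducibility of a Γ-colored d-complete poset. -/
def SlantIrreducible (κ : P → Γ) : Prop :=
  ConnectedPoset P ∧ ∀ x y : P, CoversIn (TopTree κ) x y → ∃ z : P, z ≠ y ∧ κ z = κ y

/-- A saturated chain in a subposet `S`: a chain that is convex in `S`. -/
def SaturatedChainIn (S C : Set P) : Prop :=
  C ⊆ S ∧ IsChain (· ≤ ·) C ∧ ∀ x ∈ C, ∀ y ∈ C, ∀ z ∈ S, x < z → z < y → z ∈ C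

/-- The lower frontier census at the element `y`. -/
noncomputable def LCensus (θ : Γ → Γ → ℤ) (κ : P → Γ) (y : P) : ℤ :=
  ∑ᶠ x ∈ LSet θ κ y, -θ (κ x) (κ y)

/-- A full heap: locally finite, surjectively colored, EC, NA, AC, ICE2, and every
color class order-isomorphic to ℤ. -/
def FullHeap (θ : Γ → Γ → ℤ) (κ : P → Γ) : Prop :=
  LocallyFinitePoset P ∧ Function.Surjective κ ∧ ColoredEC κ ∧ ColoredNA θ κ ∧
    ColoredAC θ κ ∧ ColoredICE2 θ κ ∧ ∀ a : Γ, Nonempty ({x : P // κ x = a} ≃o ℤ)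

end

/-- `ι` realizes the colored poset `A` as an order filter of the colored poset `B`. -/
def FilterEmbedding {G : Type*} {A B : Type*} [PartialOrder A] [PartialOrder B]
    (κ : A → G) (κ' : B → G) (ι : A → B) : Prop :=
  (∀ p q : A, ι p ≤ ι q ↔ p ≤ q) ∧ (∀ p : A, κ' (ι p) = κ p) ∧ IsUpperSet (Set.range ι)

/-- `B` is an extension of `A` by the color `a`, with extending element `x`. -/
def IsExtensionBy {G : Type*} {A B : Type*} [PartialOrder A] [PartialOrder B]
    (θ : G → G → ℤ) (κ : A → G) (κ' : B → G) (a : G) (ι : A → B) (x : B) : Prop :=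
  Finite B ∧ GColoredDComplete θ κ' ∧ ConnectedPoset B ∧
    FilterEmbedding κ κ' ι ∧ (Set.range ι)ᶜ = {x} ∧ κ' x = a

/-! ### Auxiliary development for the proof of `splitting_element` -/

namespace SIProof

set_option linter.unusedSectionVars false

lemma exists_maximal' {α : Type*} [PartialOrder α] (s : Finset α) (h : s.Nonempty) :
    ∃ m ∈ s, ∀ x ∈ s, ¬m < x := by
  obtain ⟨m, hm⟩ := Finset.exists_maximal h
  exact ⟨m, hm.1, fun x hx hlt => absurd (hm.2 hx hlt.le) (not_le_of_gt hlt)⟩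

lemma exists_minimal' {α : Type*} [PartialOrder α] (s : Finset α) (h : s.Nonempty) :
    ∃ m ∈ s, ∀ x ∈ s, ¬x < m := by
  obtain ⟨m, hm⟩ := Finset.exists_minimal h
  exact ⟨m, hm.1, fun x hx hlt => absurd (hm.2 hx hlt.le) (not_le_of_gt hlt)⟩

section
variable [PartialOrder P] [Fintype P] {θ : Γ → Γ → ℤ} {κ : P → Γ}

lemma adj_ne (hθ : DynkinDatum θ) {a b : Γ} (h : AdjColor θ a b) : a ≠ b := by
  rintro rfl
  have := hθ.1 a
  unfold AdjColor at h
  omega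

lemma adj_symm (hθ : DynkinDatum θ) {a b : Γ} (h : AdjColor θ a b) : AdjColor θ b a := by
  have hne := adj_ne hθ h
  have h0 := hθ.2.2 a b hne
  have h1 := hθ.2.1 b a hne.symm
  unfold AdjColor at *
  rcases lt_or_eq_of_le h1 with h' | h'
  · exact h'
  · exfalso
    have : θ a b = 0 := h0.2 h'
    omega

lemma adj_val (hθ : DynkinDatum θ) (hsl : SimplyLaced θ) {a b : Γ} (h : AdjColor θ a b) :
    -θ a b = 1 := by
  rcases hsl a b (adj_ne hθ h) with h' | h'
  · unfold AdjColor at h; omega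
  · omega

lemma nonadj_val (hθ : DynkinDatum θ) {a b : Γ} (hne : a ≠ b) (h : ¬ AdjColor θ a b) :
    -θ a b = 0 := by
  have := hθ.2.1 a b hne
  unfold AdjColor at h
  omega

lemma mem_topTree_iff {x : P} : x ∈ TopTree κ ↔ ∀ y : P, κ y = κ x → ¬x < y := Iff.rfl

lemma exists_top (hsur : Function.Surjective κ) (a : Γ) :
    ∃ t, κ t = a ∧ t ∈ TopTree κ := by
  classical
  obtain ⟨x, rfl⟩ := hsur a
  have hne : ({y | κ y = κ x} : Set P).toFinset.Nonempty := ⟨x, by simp⟩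
  obtain ⟨t, ht, hmax⟩ := exists_maximal' _ hne
  rw [Set.mem_toFinset] at ht
  refine ⟨t, ht, fun y hy hlt => hmax y ?_ hlt⟩
  rw [Set.mem_toFinset]
  show κ y = κ x
  rw [hy, ht]

lemma top_unique (hEC : ColoredEC κ) {t1 t2 : P} (h1 : t1 ∈ TopTree κ) (h2 : t2 ∈ TopTree κ)
    (hc : κ t1 = κ t2) : t1 = t2 := by
  rcases hEC t1 t2 hc with h | h
  · rcases eq_or_lt_of_le h with h' | h'
    · exact h'
    · exact absurd h' (h1 t2 hc.symm)
  · rcases eq_or_lt_of_le h with h' | h'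
    · exact h'.symm
    · exact absurd h' (h2 t1 hc)

lemma exists_covBy_le {x y : P} (h : x < y) : ∃ d, x ⋖ d ∧ d ≤ y := by
  classical
  have hne : (Set.Ioc x y).toFinset.Nonempty := ⟨y, by rw [Set.mem_toFinset]; exact ⟨h, le_refl y⟩⟩
  obtain ⟨d, hd, hmin⟩ := exists_minimal' _ hne
  rw [Set.mem_toFinset] at hd
  refine ⟨d, ⟨hd.1, fun z hz1 hz2 => hmin z ?_ hz2⟩, hd.2⟩
  rw [Set.mem_toFinset]
  exact ⟨hz1, (le_of_lt hz2).trans hd.2⟩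

lemma exists_le_covBy {x y : P} (h : x < y) : ∃ e, x ≤ e ∧ e ⋖ y := by
  classical
  have hne : (Set.Ico x y).toFinset.Nonempty := ⟨x, by rw [Set.mem_toFinset]; exact ⟨le_refl x, h⟩⟩
  obtain ⟨e, he, hmax⟩ := exists_maximal' _ hne
  rw [Set.mem_toFinset] at he
  refine ⟨e, he.1, he.2, fun z hz1 hz2 => hmax z ?_ hz1⟩
  rw [Set.mem_toFinset]
  exact ⟨he.1.trans hz1.le, hz2⟩

lemma USet_pair_eq (hθ : DynkinDatum θ) (hsl : SimplyLaced θ) (hU : ColoredUCB1 θ κ)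
    {t : P} (ht : t ∈ TopTree κ) {y z : P} (hy : y ∈ USet θ κ t) (hz : z ∈ USet θ κ t) :
    y = z := by
  classical
  by_contra hne
  have hle := (hU t ht).2
  have hfin : (USet θ κ t).Finite := Set.toFinite _
  rw [finsum_mem_eq_finite_toFinset_sum _ hfin] at hle
  have hterm : ∀ w ∈ hfin.toFinset, -θ (κ w) (κ t) = 1 := by
    intro w hw
    rw [Set.Finite.mem_toFinset] at hw
    exact adj_val hθ hsl hw.2
  rw [Finset.sum_congr rfl hterm, Finset.sum_const, nsmul_eq_mul, mul_one] at hle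
  have hsub : ({y, z} : Finset P) ⊆ hfin.toFinset := by
    intro w hw
    rw [Set.Finite.mem_toFinset]
    rcases Finset.mem_insert.1 hw with rfl | hw
    · exact hy
    · rw [Finset.mem_singleton] at hw; subst hw; exact hz
  have h2 : 2 ≤ hfin.toFinset.card :=
    (Finset.card_pair hne) ▸ Finset.card_le_card hsub
  have h2' : (2 : ℤ) ≤ (hfin.toFinset.card : ℤ) := by exact_mod_cast h2
  omega

lemma cov_adj (hθ : DynkinDatum θ) (hNA : ColoredNA θ κ) {x y : P} (h : x ⋖ y) :
    AdjColor θ (κ y) (κ x) := adj_symm hθ (hNA x y h)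

lemma census (hθ : DynkinDatum θ) (hsl : SimplyLaced θ) (hICE2 : ColoredICE2 θ κ)
    {x y : P} (hxy : x < y) (hcol : κ x = κ y)
    (hcons : ∀ z ∈ Set.Ioo x y, κ z ≠ κ y) :
    ∃ w1 w2, w1 ≠ w2 ∧ (w1 ∈ Set.Ioo x y ∧ AdjColor θ (κ w1) (κ y)) ∧
      (w2 ∈ Set.Ioo x y ∧ AdjColor θ (κ w2) (κ y)) ∧
      ∀ z ∈ Set.Ioo x y, AdjColor θ (κ z) (κ y) → z = w1 ∨ z = w2 := by
  classical
  have hsum := hICE2 (κ y) x y hcol rfl hxy hcons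
  have hfin : (Set.Ioo x y).Finite := Set.toFinite _
  rw [finsum_mem_eq_finite_toFinset_sum _ hfin] at hsum
  set F := hfin.toFinset.filter (fun z => AdjColor θ (κ z) (κ y)) with hF
  have hsplit : ∑ z ∈ hfin.toFinset, -θ (κ z) (κ y) = (F.card : ℤ) := by
    rw [← Finset.sum_filter_add_sum_filter_not hfin.toFinset (fun z => AdjColor θ (κ z) (κ y))]
    have h1 : ∑ z ∈ F, -θ (κ z) (κ y) = (F.card : ℤ) := by
      rw [Finset.sum_congr rfl (fun z hz => adj_val hθ hsl (Finset.mem_filter.1 hz).2),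
        Finset.sum_const, nsmul_eq_mul, mul_one]
    have h2 : ∑ z ∈ hfin.toFinset.filter (fun z => ¬ AdjColor θ (κ z) (κ y)),
        -θ (κ z) (κ y) = 0 := by
      apply Finset.sum_eq_zero
      intro z hz
      rcases Finset.mem_filter.1 hz with ⟨hz1, hz2⟩
      rw [Set.Finite.mem_toFinset] at hz1
      exact nonadj_val hθ (hcons z hz1) hz2
    rw [h1, h2, add_zero]
  rw [hsplit] at hsum
  have hcard : F.card = 2 := by exact_mod_cast hsum
  obtain ⟨w1, w2, hne, hFeq⟩ := Finset.card_eq_two.1 hcard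
  have hmem : ∀ w, w ∈ F ↔ w = w1 ∨ w = w2 := by
    intro w; rw [hFeq]; simp
  have hw1 : w1 ∈ F := (hmem w1).2 (Or.inl rfl)
  have hw2 : w2 ∈ F := (hmem w2).2 (Or.inr rfl)
  rcases Finset.mem_filter.1 hw1 with ⟨h11, h12⟩
  rcases Finset.mem_filter.1 hw2 with ⟨h21, h22⟩
  rw [Set.Finite.mem_toFinset] at h11 h21
  refine ⟨w1, w2, hne, ⟨h11, h12⟩, ⟨h21, h22⟩, fun z hz hadj => ?_⟩
  exact (hmem z).1 (Finset.mem_filter.2 ⟨(Set.Finite.mem_toFinset _).2 hz, hadj⟩)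

def IsPrev (κ : P → Γ) (p t : P) : Prop :=
  κ p = κ t ∧ p < t ∧ ∀ z, κ z = κ t → z < t → z ≤ p

lemma exists_prev (hEC : ColoredEC κ) {t z : P} (hz : κ z = κ t) (hzt : z < t) :
    ∃ p, IsPrev κ p t := by
  classical
  have hne : ({w | κ w = κ t ∧ w < t} : Set P).toFinset.Nonempty :=
    ⟨z, by rw [Set.mem_toFinset]; exact ⟨hz, hzt⟩⟩
  obtain ⟨p, hp, hmax⟩ := exists_maximal' _ hne
  rw [Set.mem_toFinset] at hp
  refine ⟨p, hp.1, hp.2, fun w hw hwt => ?_⟩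
  rcases hEC w p (by rw [hw, hp.1]) with h' | h'
  · exact h'
  · rcases eq_or_lt_of_le h' with h'' | h''
    · exact h''.symm.le
    · exact absurd h'' (hmax w (by rw [Set.mem_toFinset]; exact ⟨hw, hwt⟩))

lemma prev_not_color {p t : P} (hp : IsPrev κ p t) {z : P} (hz : z ∈ Set.Ioo p t) :
    κ z ≠ κ t := fun h => absurd (hp.2.2 z h hz.2) (not_le_of_gt hz.1)

lemma top_cover_top (hθ : DynkinDatum θ) (hsl : SimplyLaced θ) (hNA : ColoredNA θ κ)
    (hU : ColoredUCB1 θ κ) {t d : P} (ht : t ∈ TopTree κ) (hc : t ⋖ d) : d ∈ TopTree κ := by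
  intro y hy hlt
  have hdU : d ∈ USet θ κ t := ⟨hc.1, cov_adj hθ hNA hc⟩
  have hyU : y ∈ USet θ κ t := ⟨hc.1.trans hlt, by rw [hy]; exact hdU.2⟩
  exact absurd (USet_pair_eq hθ hsl hU ht hdU hyU) (ne_of_lt hlt)

lemma cover_le_of_top (hθ : DynkinDatum θ) (hsl : SimplyLaced θ) (hNA : ColoredNA θ κ)
    (hU : ColoredUCB1 θ κ) {t d y : P} (ht : t ∈ TopTree κ) (hc : t ⋖ d) (hy : t < y) :
    d ≤ y := by
  obtain ⟨e, he, hey⟩ := exists_covBy_le hy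
  have h : e = d := USet_pair_eq hθ hsl hU ht ⟨he.1, cov_adj hθ hNA he⟩ ⟨hc.1, cov_adj hθ hNA hc⟩
  rw [← h]; exact hey

def Child (κ : P → Γ) (c t : P) : Prop := c ∈ TopTree κ ∧ c ⋖ t

def Branch (κ : P → Γ) (s : P) : Prop :=
  s ∈ TopTree κ ∧ ∃ c1 c2, Child κ c1 s ∧ Child κ c2 s ∧ c1 ≠ c2

lemma coversIn_iff (hθ : DynkinDatum θ) (hsl : SimplyLaced θ) (hNA : ColoredNA θ κ)
    (hU : ColoredUCB1 θ κ) {c t : P} :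
    CoversIn (TopTree κ) c t ↔ Child κ c t := by
  constructor
  · rintro ⟨hcT, htT, hlt, hmin⟩
    obtain ⟨d, hd, hdt⟩ := exists_covBy_le hlt
    have hdT : d ∈ TopTree κ := top_cover_top hθ hsl hNA hU hcT hd
    rcases eq_or_lt_of_le hdt with rfl | hlt2
    · exact ⟨hcT, hd⟩
    · exact absurd hlt2 (hmin d hdT hd.1)
  · rintro ⟨hcT, hcov⟩
    exact ⟨hcT, top_cover_top hθ hsl hNA hU hcT hcov, hcov.1,
      fun z hz hcz hzt => absurd (lt_of_lt_of_le hzt (cover_le_of_top hθ hsl hNA hU hcT hcov hcz)) (lt_irrefl z)⟩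

lemma climb (hθ : DynkinDatum θ) (hsl : SimplyLaced θ) (hNA : ColoredNA θ κ)
    (hU : ColoredUCB1 θ κ) {s t : P} (hs : s ∈ TopTree κ) (ht : t ∈ TopTree κ) (hst : s < t) :
    ∃ u, Child κ u t ∧ s ≤ u := by
  classical
  have hne : ({w | w ∈ TopTree κ ∧ s ≤ w ∧ w < t} : Set P).toFinset.Nonempty :=
    ⟨s, by rw [Set.mem_toFinset]; exact ⟨hs, le_refl s, hst⟩⟩
  obtain ⟨u, hu, hmax⟩ := exists_maximal' _ hne
  rw [Set.mem_toFinset] at hu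
  obtain ⟨d, hd, hdt⟩ := exists_covBy_le hu.2.2
  have hdT := top_cover_top hθ hsl hNA hU hu.1 hd
  rcases eq_or_lt_of_le hdt with rfl | hlt2
  · exact ⟨u, ⟨hu.1, hd⟩, hu.2.1⟩
  · exact absurd hd.1
      (hmax d (by rw [Set.mem_toFinset]; exact ⟨hdT, hu.2.1.trans hd.1.le, hlt2⟩))

lemma child_prev (hθ : DynkinDatum θ) (hsl : SimplyLaced θ) (hEC : ColoredEC κ)
    (hNA : ColoredNA θ κ) (hU : ColoredUCB1 θ κ)
    (hslant : ∀ x y : P, CoversIn (TopTree κ) x y → ∃ z : P, z ≠ y ∧ κ z = κ y)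
    {c t : P} (h : Child κ c t) : ∃ p, IsPrev κ p t := by
  obtain ⟨z, hz, hcol⟩ := hslant c t ((coversIn_iff hθ hsl hNA hU).2 h)
  have htT : t ∈ TopTree κ := top_cover_top hθ hsl hNA hU h.1 h.2
  have hlt : z < t := by
    rcases hEC z t hcol with h' | h'
    · exact lt_of_le_of_ne h' hz
    · rcases eq_or_lt_of_le h' with h'' | h''
      · exact absurd h''.symm hz
      · exact absurd h'' (htT z hcol)
  exact exists_prev hEC hcol hlt

lemma contrib (hθ : DynkinDatum θ) (hsl : SimplyLaced θ) (hsur : Function.Surjective κ)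
    (hNA : ColoredNA θ κ) (hAC : ColoredAC θ κ) (hU : ColoredUCB1 θ κ)
    {t p z : P} (ht : t ∈ TopTree κ) (hp : IsPrev κ p t)
    (hz : z ∈ Set.Ioo p t) (hadj : AdjColor θ (κ z) (κ t)) :
    (∃ c, Child κ c t ∧ κ c = κ z) ∨ (∃ q, t ⋖ q ∧ κ q = κ z) := by
  obtain ⟨tz, htzc, htzT⟩ := exists_top hsur (κ z)
  have hadj2 : AdjColor θ (κ tz) (κ t) := by rw [htzc]; exact hadj
  have hne : tz ≠ t := fun h => (adj_ne hθ hadj2) (by rw [h])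
  rcases hAC tz t hadj2 with h' | h'
  · have hlt := lt_of_le_of_ne h' hne
    obtain ⟨d, hd, hdt⟩ := exists_covBy_le hlt
    have hdeq : d = t := USet_pair_eq hθ hsl hU htzT ⟨hd.1, cov_adj hθ hNA hd⟩
      ⟨hlt, adj_symm hθ hadj2⟩
    rw [hdeq] at hd
    exact Or.inl ⟨tz, ⟨htzT, hd⟩, htzc⟩
  · have hlt := lt_of_le_of_ne h' (Ne.symm hne)
    obtain ⟨d, hd, hdt⟩ := exists_covBy_le hlt
    have hdeq : d = tz := USet_pair_eq hθ hsl hU ht ⟨hd.1, cov_adj hθ hNA hd⟩ ⟨hlt, hadj2⟩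
    rw [hdeq] at hd
    exact Or.inr ⟨tz, hd, htzc⟩

lemma pigeon3 {w1 w2 a b c : P} (h1 : a = w1 ∨ a = w2) (h2 : b = w1 ∨ b = w2)
    (h3 : c = w1 ∨ c = w2) (hab : a ≠ b) (hac : a ≠ c) (hbc : b ≠ c) : False := by
  rcases h1 with rfl | rfl <;> rcases h2 with rfl | rfl <;> rcases h3 with rfl | rfl <;> tauto

lemma child_mem_Ioo (hθ : DynkinDatum θ) (hNA : ColoredNA θ κ) (hAC : ColoredAC θ κ)
    {c t p : P} (hc : c ⋖ t) (hp : IsPrev κ p t) : c ∈ Set.Ioo p t := by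
  have hadj : AdjColor θ (κ c) (κ t) := hNA c t hc
  have hne : κ c ≠ κ t := adj_ne hθ hadj
  have hcomp : c ≤ p ∨ p ≤ c := hAC c p (by rw [hp.1]; exact hadj)
  rcases hcomp with h' | h'
  · rcases eq_or_lt_of_le h' with rfl | h''
    · exact absurd hp.1 hne
    · exact absurd hp.2.1 (hc.2 h'')
  · exact ⟨lt_of_le_of_ne h' (fun h => hne (h ▸ hp.1)), hc.1⟩

lemma child_lt_top {g c1 : P} (hEC : ColoredEC κ) (hc1T : c1 ∈ TopTree κ)
    (hgcol : κ g = κ c1) (hgne : g ≠ c1) : g < c1 := by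
  rcases hEC g c1 hgcol with h' | h'
  · exact lt_of_le_of_ne h' hgne
  · rcases eq_or_lt_of_le h' with h'' | h''
    · exact absurd h''.symm hgne
    · exact absurd h'' (hc1T g hgcol)

lemma descent (hθ : DynkinDatum θ) (hsl : SimplyLaced θ) (hsur : Function.Surjective κ)
    (hEC : ColoredEC κ) (hNA : ColoredNA θ κ) (hAC : ColoredAC θ κ)
    (hICE2 : ColoredICE2 θ κ) (hU : ColoredUCB1 θ κ) :
    ∀ t : P, t ∈ TopTree κ →
      (∃ p, IsPrev κ p t ∧ ∀ z ∈ Set.Ioo p t, AdjColor θ (κ z) (κ t) →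
        ∃ c, Child κ c t ∧ κ c = κ z) →
      ∃ s, Branch κ s := by
  have wf : WellFounded ((· < ·) : P → P → Prop) := (inferInstance : WellFoundedLT P).wf
  intro t
  refine wf.induction
    (C := fun t => t ∈ TopTree κ →
      (∃ p, IsPrev κ p t ∧ ∀ z ∈ Set.Ioo p t, AdjColor θ (κ z) (κ t) →
        ∃ c, Child κ c t ∧ κ c = κ z) → ∃ s, Branch κ s) t ?_
  rintro t IH htT ⟨p, hp, hS0⟩
  obtain ⟨w1, w2, hw12, ⟨hw1m, hw1a⟩, ⟨hw2m, hw2a⟩, hall⟩ :=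
    census hθ hsl hICE2 hp.2.1 hp.1 (fun z hz => prev_not_color hp hz)
  obtain ⟨c1, hc1, hc1col⟩ := hS0 w1 hw1m hw1a
  by_cases hbr : ∃ c', Child κ c' t ∧ c' ≠ c1
  · obtain ⟨c', hc', hne⟩ := hbr
    exact ⟨t, htT, c', c1, hc', hc1, hne⟩
  push_neg at hbr
  obtain ⟨c2, hc2, hc2col⟩ := hS0 w2 hw2m hw2a
  have hc2e : c2 = c1 := hbr c2 hc2
  rw [hc2e] at hc2col
  have hc1Ioo : c1 ∈ Set.Ioo p t := child_mem_Ioo hθ hNA hAC hc1.2 hp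
  have hc1adjt : AdjColor θ (κ c1) (κ t) := hNA c1 t hc1.2
  have hkey : ∀ g : P, g ∈ Set.Ioo p t → κ g = κ c1 → g ≠ c1 → ∃ s, Branch κ s := by
    intro g hgm hgcol hgne
    have hglt : g < c1 := child_lt_top hEC hc1.1 hgcol hgne
    have hprev : IsPrev κ g c1 := by
      refine ⟨hgcol, hglt, fun z hz hzlt => ?_⟩
      rcases hEC z g (by rw [hz, hgcol]) with h' | h'
      · exact h'
      · rcases eq_or_lt_of_le h' with h'' | h''
        · exact h''.symm.le
        · exfalso
          have hzm : z ∈ Set.Ioo p t := ⟨hgm.1.trans h'', hzlt.trans hc1Ioo.2⟩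
          have hzadj : AdjColor θ (κ z) (κ t) := by rw [hz]; exact hc1adjt
          have hgadj : AdjColor θ (κ g) (κ t) := by rw [hgcol]; exact hc1adjt
          exact pigeon3 (hall z hzm hzadj) (hall g hgm hgadj) (hall c1 hc1Ioo hc1adjt)
            (ne_of_gt h'') (ne_of_lt hzlt) hgne
    have hcond : ∀ z ∈ Set.Ioo g c1, AdjColor θ (κ z) (κ c1) →
        ∃ c, Child κ c c1 ∧ κ c = κ z := by
      intro z hz hadj
      rcases contrib hθ hsl hsur hNA hAC hU hc1.1 hprev hz hadj with h | ⟨q, hq, hqc⟩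
      · exact h
      · exfalso
        have hqt : q = t := USet_pair_eq hθ hsl hU hc1.1 ⟨hq.1, cov_adj hθ hNA hq⟩
          ⟨hc1.2.1, cov_adj hθ hNA hc1.2⟩
        rw [hqt] at hqc
        have hzm : z ∈ Set.Ioo p t := ⟨hgm.1.trans hz.1, hz.2.trans hc1Ioo.2⟩
        exact prev_not_color hp hzm hqc.symm
    exact IH c1 hc1Ioo.2 hc1.1 ⟨g, hprev, hcond⟩
  rcases hall c1 hc1Ioo hc1adjt with h | h
  · exact hkey w2 hw2m hc2col.symm (fun hh => hw12 (h.symm.trans hh.symm))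
  · exact hkey w1 hw1m hc1col.symm (fun hh => hw12 (hh.trans h))

lemma cover_le_of_le_max (hθ : DynkinDatum θ) (hsl : SimplyLaced θ) (hEC : ColoredEC κ)
    (hNA : ColoredNA θ κ) (hAC : ColoredAC θ κ) (hICE2 : ColoredICE2 θ κ)
    (hU : ColoredUCB1 θ κ) {x : P} (hx : ∀ y, ¬ x < y) :
    ∀ u, u ≤ x → ∀ v, u ⋖ v → v ≤ x := by
  classical
  have wf : WellFounded ((· > ·) : P → P → Prop) := (inferInstance : WellFoundedGT P).wf
  intro u
  refine wf.induction (C := fun u => u ≤ x → ∀ v, u ⋖ v → v ≤ x) u ?_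
  intro u IH hux v huv
  rcases eq_or_lt_of_le hux with rfl | hux'
  · exact absurd huv.1 (hx v)
  obtain ⟨w, huw, hwx⟩ := exists_covBy_le hux'
  by_cases hvw : v = w
  · rw [hvw]; exact hwx
  by_cases hvw2 : v ≤ w
  · exact hvw2.trans hwx
  by_cases hwv : w ≤ v
  · rcases eq_or_lt_of_le hwv with h' | h'
    · exact absurd h'.symm hvw
    · exact absurd h' (huv.2 huw.1)
  by_cases huT : u ∈ TopTree κ
  · exact absurd
      (USet_pair_eq hθ hsl hU huT ⟨huv.1, cov_adj hθ hNA huv⟩ ⟨huw.1, cov_adj hθ hNA huw⟩) hvw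
  rw [mem_topTree_iff] at huT
  push_neg at huT
  obtain ⟨y0, hy0c, hy0lt⟩ := huT
  have hne : ({w | κ w = κ u ∧ u < w} : Set P).toFinset.Nonempty :=
    ⟨y0, by rw [Set.mem_toFinset]; exact ⟨hy0c, hy0lt⟩⟩
  obtain ⟨u', hu', hminu⟩ := exists_minimal' _ hne
  rw [Set.mem_toFinset] at hu'
  have hnext : ∀ z, κ z = κ u → u < z → u' ≤ z := by
    intro z hz hlt
    rcases hEC z u' (by rw [hz, hu'.1]) with h' | h'
    · rcases eq_or_lt_of_le h' with h'' | h''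
      · exact h''.ge
      · exact absurd h'' (hminu z (by rw [Set.mem_toFinset]; exact ⟨hz, hlt⟩))
    · exact h'
  have hcons : ∀ z ∈ Set.Ioo u u', κ z ≠ κ u' := by
    intro z hz h
    exact absurd (hnext z (by rw [h, hu'.1]) hz.1) (not_le_of_gt hz.2)
  obtain ⟨w1, w2, hw12, _, _, hall⟩ := census hθ hsl hICE2 hu'.2 hu'.1.symm hcons
  have hlt_next : ∀ v' : P, u ⋖ v' → v' < u' := by
    intro v' hv'
    have hadj : AdjColor θ (κ v') (κ u') := by rw [hu'.1]; exact cov_adj hθ hNA hv'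
    rcases hAC v' u' hadj with h' | h'
    · rcases eq_or_lt_of_le h' with h'' | h''
      · exact absurd (by rw [h'']) (adj_ne hθ hadj)
      · exact h''
    · exfalso
      rcases eq_or_lt_of_le h' with h'' | h''
      · exact (adj_ne hθ hadj) (by rw [← h''])
      · exact (hv'.2 hu'.2) h''
  have hvlt : v < u' := hlt_next v huv
  have hwlt : w < u' := hlt_next w huw
  have hadjv : AdjColor θ (κ v) (κ u') := by rw [hu'.1]; exact cov_adj hθ hNA huv
  have hadjw : AdjColor θ (κ w) (κ u') := by rw [hu'.1]; exact cov_adj hθ hNA huw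
  obtain ⟨f, hwf, hfu'⟩ := exists_le_covBy hwlt
  have hfm : f ∈ Set.Ioo u u' := ⟨lt_of_lt_of_le huw.1 hwf, hfu'.1⟩
  have hfadj : AdjColor θ (κ f) (κ u') := hNA f u' hfu'
  have hfvw : f = v ∨ f = w := by
    have h1 := hall v ⟨huv.1, hvlt⟩ hadjv
    have h2 := hall w ⟨huw.1, hwlt⟩ hadjw
    have h3 := hall f hfm hfadj
    rcases h1 with rfl | rfl <;> rcases h2 with rfl | rfl <;> tauto
  rcases hfvw with rfl | rfl
  · exact absurd hwf hwv
  · have hu'x : u' ≤ x := IH f huw.1 hwx u' hfu'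
    exact hvlt.le.trans hu'x

lemma exists_max [Nonempty P] (hθ : DynkinDatum θ) (hsl : SimplyLaced θ) (hEC : ColoredEC κ)
    (hNA : ColoredNA θ κ) (hAC : ColoredAC θ κ) (hICE2 : ColoredICE2 θ κ)
    (hU : ColoredUCB1 θ κ) (hconn : ConnectedPoset P) :
    ∃ m : P, ∀ p, p ≤ m := by
  classical
  obtain ⟨m, -, hm⟩ := exists_maximal' (Finset.univ : Finset P)
    ⟨Classical.arbitrary P, Finset.mem_univ _⟩
  have hmax : ∀ y, ¬ m < y := fun y => hm y (Finset.mem_univ y)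
  have hup : ∀ p : P, p ≤ m → ∀ q, p ≤ q → q ≤ m := by
    have wf : WellFounded ((· > ·) : P → P → Prop) := (inferInstance : WellFoundedGT P).wf
    intro p
    refine wf.induction (C := fun p => p ≤ m → ∀ q, p ≤ q → q ≤ m) p ?_
    intro p IH hpm q hpq
    rcases eq_or_lt_of_le hpq with rfl | hlt
    · exact hpm
    obtain ⟨d, hd, hdq⟩ := exists_covBy_le hlt
    have hdm : d ≤ m := cover_le_of_le_max hθ hsl hEC hNA hAC hICE2 hU hmax p hpm d hd
    exact IH d hd.1 hdm q hdq
  refine ⟨m, fun p => ?_⟩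
  by_contra hpm
  obtain ⟨a, ha, b, hb, hab⟩ := hconn {z | z ≤ m} ⟨m, le_refl m⟩ ⟨p, hpm⟩
  rcases hab with h | h
  · exact hb (hup a ha b h)
  · exact hb (h.trans ha)

def S1 (θ : Γ → Γ → ℤ) (κ : P → Γ) (t : P) : Prop :=
  t ∈ TopTree κ ∧ ∃ p y, IsPrev κ p t ∧ y ∈ Set.Ioo p t ∧
    AdjColor θ (κ y) (κ t) ∧ ∀ c, Child κ c t → κ y ≠ κ c

lemma S1_not_branch (hθ : DynkinDatum θ) (hsl : SimplyLaced θ) (hEC : ColoredEC κ)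
    (hNA : ColoredNA θ κ) (hAC : ColoredAC θ κ) (hICE2 : ColoredICE2 θ κ)
    {t : P} (h : S1 θ κ t) :
    ¬ ∃ c1 c2, Child κ c1 t ∧ Child κ c2 t ∧ c1 ≠ c2 := by
  rintro ⟨c1, c2, hc1, hc2, hne⟩
  obtain ⟨htT, p, y, hp, hym, hyadj, hynot⟩ := h
  obtain ⟨w1, w2, hw12, -, -, hall⟩ :=
    census hθ hsl hICE2 hp.2.1 hp.1 (fun z hz => prev_not_color hp hz)
  have h1 := hall c1 (child_mem_Ioo hθ hNA hAC hc1.2 hp) (hNA c1 t hc1.2)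
  have h2 := hall c2 (child_mem_Ioo hθ hNA hAC hc2.2 hp) (hNA c2 t hc2.2)
  have h3 := hall y hym hyadj
  exact pigeon3 h1 h2 h3 hne (fun h => hynot c1 hc1 (by rw [h])) (fun h => hynot c2 hc2 (by rw [h]))

lemma S1_gen (hθ : DynkinDatum θ) (hsl : SimplyLaced θ) (hEC : ColoredEC κ)
    (hNA : ColoredNA θ κ) (hAC : ColoredAC θ κ) (hU : ColoredUCB1 θ κ)
    (hslant : ∀ x y : P, CoversIn (TopTree κ) x y → ∃ z : P, z ≠ y ∧ κ z = κ y)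
    {t p v : P} (htT : t ∈ TopTree κ) (hp : IsPrev κ p t) (hv : Child κ v t)
    (hvchild : ∃ d, Child κ d v)
    (huniq : ∀ w ∈ Set.Ioo p t, κ w = κ v → w = v) :
    S1 θ κ v := by
  obtain ⟨d, hd⟩ := hvchild
  obtain ⟨q, hq⟩ := child_prev hθ hsl hEC hNA hU hslant hd
  have hvIoo := child_mem_Ioo hθ hNA hAC hv.2 hp
  have hvadj : AdjColor θ (κ v) (κ t) := hNA v t hv.2
  have hqp : q < p := by
    rcases hAC q p (by rw [hq.1, hp.1]; exact hvadj) with h' | h'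
    · rcases eq_or_lt_of_le h' with h'' | h''
      · exact absurd (by rw [← hq.1, h'', hp.1]) (adj_ne hθ hvadj)
      · exact h''
    · exfalso
      rcases eq_or_lt_of_le h' with h'' | h''
      · exact (adj_ne hθ hvadj) (by rw [← hq.1, ← h'', hp.1])
      · exact absurd (huniq q ⟨h'', hq.2.1.trans hvIoo.2⟩ hq.1) (ne_of_lt hq.2.1)
  refine ⟨hv.1, q, p, hq, ⟨hqp, hvIoo.1⟩, by rw [hp.1]; exact adj_symm hθ hvadj, ?_⟩
  intro c hc hcol
  have hct : c = t := top_unique hEC hc.1 htT (by rw [← hcol, hp.1])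
  rw [hct] at hc
  exact absurd hvIoo.2 (lt_asymm hc.2.1)

lemma S1_propagate (hθ : DynkinDatum θ) (hsl : SimplyLaced θ) (hEC : ColoredEC κ)
    (hNA : ColoredNA θ κ) (hAC : ColoredAC θ κ) (hICE2 : ColoredICE2 θ κ)
    (hU : ColoredUCB1 θ κ)
    (hslant : ∀ x y : P, CoversIn (TopTree κ) x y → ∃ z : P, z ≠ y ∧ κ z = κ y)
    {t v : P} (ht : S1 θ κ t) (hv : Child κ v t) (hvchild : ∃ d, Child κ d v) :
    S1 θ κ v := by
  obtain ⟨htT, p, y, hp, hym, hyadj, hynot⟩ := ht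
  refine S1_gen hθ hsl hEC hNA hAC hU hslant htT hp hv hvchild ?_
  intro w hwm hwcol
  by_contra hwv
  obtain ⟨w1, w2, hw12, -, -, hall⟩ :=
    census hθ hsl hICE2 hp.2.1 hp.1 (fun z hz => prev_not_color hp hz)
  have h1 := hall v (child_mem_Ioo hθ hNA hAC hv.2 hp) (hNA v t hv.2)
  have h2 := hall y hym hyadj
  have h3 := hall w hwm (by rw [hwcol]; exact hNA v t hv.2)
  exact pigeon3 h1 h2 h3 (fun h => hynot v hv (by rw [h]))
    (fun h => hwv h.symm) (fun h => hynot v hv (by rw [h]; exact hwcol))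

lemma S1_init (hθ : DynkinDatum θ) (hsl : SimplyLaced θ) (hEC : ColoredEC κ)
    (hNA : ColoredNA θ κ) (hAC : ColoredAC θ κ) (hICE2 : ColoredICE2 θ κ)
    (hU : ColoredUCB1 θ κ)
    (hslant : ∀ x y : P, CoversIn (TopTree κ) x y → ∃ z : P, z ≠ y ∧ κ z = κ y)
    {s v : P} (hs : Branch κ s) (hv : Child κ v s) (hvchild : ∃ d, Child κ d v) :
    S1 θ κ v := by
  obtain ⟨hsT, c1, c2, hc1, hc2, hne⟩ := hs
  obtain ⟨p, hp⟩ := child_prev hθ hsl hEC hNA hU hslant hc1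
  refine S1_gen hθ hsl hEC hNA hAC hU hslant hsT hp hv hvchild ?_
  intro w hwm hwcol
  by_contra hwv
  obtain ⟨w1, w2, hw12, -, -, hall⟩ :=
    census hθ hsl hICE2 hp.2.1 hp.1 (fun z hz => prev_not_color hp hz)
  have h1 := hall c1 (child_mem_Ioo hθ hNA hAC hc1.2 hp) (hNA c1 s hc1.2)
  have h2 := hall c2 (child_mem_Ioo hθ hNA hAC hc2.2 hp) (hNA c2 s hc2.2)
  have hv' := hall v (child_mem_Ioo hθ hNA hAC hv.2 hp) (hNA v s hv.2)
  have h3 := hall w hwm (by rw [hwcol]; exact hNA v s hv.2)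
  -- v must be c1 or c2
  by_cases hvc1 : v = c1
  · -- w ≠ v, w ≠ c2 (as κ w = κ v = κ c1 and c2 has a different color), c2 ≠ v
    refine pigeon3 h3 hv' h2 hwv (fun h => ?_) (fun h => ?_)
    · -- w = c2 : κ c2 = κ v = κ c1, so c2 = c1, contradiction
      exact hne (top_unique hEC hc1.1 hc2.1 (by rw [← hvc1, ← hwcol, h]))
    · -- v = c2 : contradiction with v = c1, c1 ≠ c2
      exact hne (by rw [← hvc1]; exact h)
  by_cases hvc2 : v = c2
  · refine pigeon3 h3 hv' h1 hwv (fun h => ?_) (fun h => ?_)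
    · exact hne (top_unique hEC hc1.1 hc2.1 (by rw [← hvc2, ← hwcol, h]))
    · exact hne (by rw [← hvc2]; exact h.symm)
  · exact pigeon3 h1 h2 hv' hne (fun h => hvc1 h.symm) (fun h => hvc2 h.symm)

lemma no_branch_below (hθ : DynkinDatum θ) (hsl : SimplyLaced θ) (hEC : ColoredEC κ)
    (hNA : ColoredNA θ κ) (hAC : ColoredAC θ κ) (hICE2 : ColoredICE2 θ κ)
    (hU : ColoredUCB1 θ κ)
    (hslant : ∀ x y : P, CoversIn (TopTree κ) x y → ∃ z : P, z ≠ y ∧ κ z = κ y) :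
    ∀ t : P, S1 θ κ t → ∀ s', s' ∈ TopTree κ → s' ≤ t →
      ¬ ∃ c1 c2, Child κ c1 s' ∧ Child κ c2 s' ∧ c1 ≠ c2 := by
  have wf : WellFounded ((· < ·) : P → P → Prop) := (inferInstance : WellFoundedLT P).wf
  intro t
  refine wf.induction (C := fun t => S1 θ κ t → ∀ s', s' ∈ TopTree κ → s' ≤ t →
      ¬ ∃ c1 c2, Child κ c1 s' ∧ Child κ c2 s' ∧ c1 ≠ c2) t ?_
  intro t IH hS1 s' hs'T hle hbr
  rcases eq_or_lt_of_le hle with rfl | hlt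
  · exact S1_not_branch hθ hsl hEC hNA hAC hICE2 hS1 hbr
  obtain ⟨u, hu, hs'u⟩ := climb hθ hsl hNA hU hs'T hS1.1 hlt
  have huchild : ∃ d, Child κ d u := by
    rcases eq_or_lt_of_le hs'u with rfl | hlt2
    · obtain ⟨c1, c2, hc1, -, -⟩ := hbr; exact ⟨c1, hc1⟩
    · obtain ⟨d, hd, -⟩ := climb hθ hsl hNA hU hs'T hu.1 hlt2; exact ⟨d, hd⟩
  have hS1u : S1 θ κ u := S1_propagate hθ hsl hEC hNA hAC hICE2 hU hslant hS1 hu huchild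
  rcases eq_or_lt_of_le hs'u with rfl | hlt2
  · exact S1_not_branch hθ hsl hEC hNA hAC hICE2 hS1u hbr
  · exact IH u hu.2.1 hS1u s' hs'T hlt2.le hbr

lemma no_two_branches (hθ : DynkinDatum θ) (hsl : SimplyLaced θ) (hEC : ColoredEC κ)
    (hNA : ColoredNA θ κ) (hAC : ColoredAC θ κ) (hICE2 : ColoredICE2 θ κ)
    (hU : ColoredUCB1 θ κ)
    (hslant : ∀ x y : P, CoversIn (TopTree κ) x y → ∃ z : P, z ≠ y ∧ κ z = κ y)
    {s u : P} (hs : Branch κ s) (hu : Branch κ u) (hsu : s < u) : False := by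
  obtain ⟨v, hv, hsv⟩ := climb hθ hsl hNA hU hs.1 hu.1 hsu
  have hvchild : ∃ d, Child κ d v := by
    rcases eq_or_lt_of_le hsv with rfl | hlt
    · obtain ⟨-, c1, c2, hc1, -, -⟩ := hs; exact ⟨c1, hc1⟩
    · obtain ⟨d, hd, -⟩ := climb hθ hsl hNA hU hs.1 hv.1 hlt; exact ⟨d, hd⟩
  have hS1v : S1 θ κ v := S1_init hθ hsl hEC hNA hAC hICE2 hU hslant hu hv hvchild
  exact no_branch_below hθ hsl hEC hNA hAC hICE2 hU hslant v hS1v s hs.1 hsv hs.2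

lemma branch_comparable [Nonempty P] (hθ : DynkinDatum θ) (hsl : SimplyLaced θ)
    (hEC : ColoredEC κ) (hNA : ColoredNA θ κ) (hAC : ColoredAC θ κ)
    (hICE2 : ColoredICE2 θ κ) (hU : ColoredUCB1 θ κ) (hconn : ConnectedPoset P)
    (hslant : ∀ x y : P, CoversIn (TopTree κ) x y → ∃ z : P, z ≠ y ∧ κ z = κ y)
    {s : P} (hs : Branch κ s) :
    ∀ t ∈ TopTree κ, s ≤ t ∨ t ≤ s := by
  classical
  intro t htT
  by_contra hcon
  push_neg at hcon
  obtain ⟨hns, hnt⟩ := hcon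
  obtain ⟨m, hm⟩ := exists_max hθ hsl hEC hNA hAC hICE2 hU hconn
  have hmT : m ∈ TopTree κ := fun y _ hlt => absurd (hm y) (not_le_of_gt hlt)
  have hW : ({w | w ∈ TopTree κ ∧ t ≤ w ∧ s ≤ w} : Set P).toFinset.Nonempty :=
    ⟨m, by rw [Set.mem_toFinset]; exact ⟨hmT, hm t, hm s⟩⟩
  obtain ⟨u, hu, hmin⟩ := exists_minimal' _ hW
  rw [Set.mem_toFinset] at hu
  have htu : t < u := lt_of_le_of_ne hu.2.1 (fun h => hns (by rw [h]; exact hu.2.2))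
  have hsu : s < u := lt_of_le_of_ne hu.2.2 (fun h => hnt (by rw [h]; exact hu.2.1))
  obtain ⟨w1', hw1, htw1⟩ := climb hθ hsl hNA hU htT hu.1 htu
  obtain ⟨w2', hw2, hsw2⟩ := climb hθ hsl hNA hU hs.1 hu.1 hsu
  have hne : w1' ≠ w2' := by
    rintro rfl
    exact absurd hw1.2.1
      (hmin w1' (by rw [Set.mem_toFinset]; exact ⟨hw1.1, htw1, hsw2⟩))
  exact no_two_branches hθ hsl hEC hNA hAC hICE2 hU hslant hs
    ⟨hu.1, w1', w2', hw1, hw2, hne⟩ hsu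

end

end SIProof
/-- In a slant irreducible finite Γ-colored d-complete poset with Γ
simply laced whose top tree has more than one element, there is a unique element of
the top tree covering more than one element of the top tree; it covers exactly two
and is comparable to every element of the top tree. -/
theorem splitting_element [Fintype Γ] [PartialOrder P] [Fintype P] [Nonempty P]
    (θ : Γ → Γ → ℤ) (κ : P → Γ) (hθ : DynkinDatum θ) (hsl : SimplyLaced θ)
    (hdc : GColoredDComplete θ κ) (hsi : SlantIrreducible κ)
    (hnt : (TopTree κ).Nontrivial) :
    ∃ s ∈ TopTree κ, {x : P | CoversIn (TopTree κ) x s}.ncard = 2 ∧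
      (∀ t ∈ TopTree κ, s ≤ t ∨ t ≤ s) ∧
      ∀ s' ∈ TopTree κ, 1 < {x : P | CoversIn (TopTree κ) x s'}.ncard → s' = s := by
  classical
  obtain ⟨-, hsur, hEC, hNA, hAC, hICE2, hU⟩ := hdc
  obtain ⟨hconn, hslant⟩ := hsi
  obtain ⟨m, hm⟩ := SIProof.exists_max hθ hsl hEC hNA hAC hICE2 hU hconn
  have hmT : m ∈ TopTree κ := fun y _ hlt => absurd (hm y) (not_le_of_gt hlt)
  obtain ⟨t', ht'T, ht'ne⟩ : ∃ t', t' ∈ TopTree κ ∧ t' ≠ m := by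
    obtain ⟨a, ha, b, hb, hab⟩ := hnt
    by_cases h : a = m
    · exact ⟨b, hb, fun hbm => hab (by rw [h, hbm])⟩
    · exact ⟨a, ha, h⟩
  have ht'm : t' < m := lt_of_le_of_ne (hm t') ht'ne
  obtain ⟨u0, hu0, -⟩ := SIProof.climb hθ hsl hNA hU ht'T hmT ht'm
  obtain ⟨p0, hp0⟩ := SIProof.child_prev hθ hsl hEC hNA hU hslant hu0
  have hS0m : ∀ z ∈ Set.Ioo p0 m, AdjColor θ (κ z) (κ m) →
      ∃ c, SIProof.Child κ c m ∧ κ c = κ z := by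
    intro z hz hadj
    rcases SIProof.contrib hθ hsl hsur hNA hAC hU hmT hp0 hz hadj with h | ⟨q, hq, -⟩
    · exact h
    · exact absurd (hm q) (not_le_of_gt hq.1)
  obtain ⟨s, hsB⟩ := SIProof.descent hθ hsl hsur hEC hNA hAC hICE2 hU m hmT ⟨p0, hp0, hS0m⟩
  obtain ⟨hsT, c1, c2, hc1, hc2, hc12⟩ := hsB
  obtain ⟨ps, hps⟩ := SIProof.child_prev hθ hsl hEC hNA hU hslant hc1
  obtain ⟨w1, w2, hw12, -, -, hall⟩ :=
    SIProof.census hθ hsl hICE2 hps.2.1 hps.1 (fun z hz => SIProof.prev_not_color hps hz)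
  have hsB' : SIProof.Branch κ s := ⟨hsT, c1, c2, hc1, hc2, hc12⟩
  have hset : {x : P | CoversIn (TopTree κ) x s} = {c1, c2} := by
    ext x
    simp only [Set.mem_setOf_eq, Set.mem_insert_iff, Set.mem_singleton_iff]
    constructor
    · intro hx
      have hch : SIProof.Child κ x s := (SIProof.coversIn_iff hθ hsl hNA hU).1 hx
      by_contra hcon
      push_neg at hcon
      exact SIProof.pigeon3
        (hall x (SIProof.child_mem_Ioo hθ hNA hAC hch.2 hps) (hNA x s hch.2))
        (hall c1 (SIProof.child_mem_Ioo hθ hNA hAC hc1.2 hps) (hNA c1 s hc1.2))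
        (hall c2 (SIProof.child_mem_Ioo hθ hNA hAC hc2.2 hps) (hNA c2 s hc2.2))
        hcon.1 hcon.2 hc12
    · rintro (rfl | rfl)
      · exact (SIProof.coversIn_iff hθ hsl hNA hU).2 hc1
      · exact (SIProof.coversIn_iff hθ hsl hNA hU).2 hc2
  have hcard : {x : P | CoversIn (TopTree κ) x s}.ncard = 2 := by
    rw [hset]; exact Set.ncard_pair hc12
  have hcomp := SIProof.branch_comparable hθ hsl hEC hNA hAC hICE2 hU hconn hslant hsB'
  refine ⟨s, hsT, hcard, hcomp, ?_⟩
  intro s' hs'T hgt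
  obtain ⟨a, b, haC, hbC, hab⟩ := (Set.one_lt_ncard_iff (Set.toFinite _)).1 hgt
  have hbrs' : SIProof.Branch κ s' := ⟨hs'T, a, b,
    (SIProof.coversIn_iff hθ hsl hNA hU).1 haC, (SIProof.coversIn_iff hθ hsl hNA hU).1 hbC, hab⟩
  by_contra hne
  rcases hcomp s' hs'T with h | h
  · exact SIProof.no_two_branches hθ hsl hEC hNA hAC hICE2 hU hslant hsB' hbrs'
      (lt_of_le_of_ne h (Ne.symm hne))
  · exact SIProof.no_two_branches hθ hsl hEC hNA hAC hICE2 hU hslant hbrs' hsB'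
      (lt_of_le_of_ne h hne)
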